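/- arXiv:1105.0015 — 2 statements merged into one kernel-verified Lean document; each statement's English description precedes it below -/
import Mathlib

section
/- Let {γ_k, k ≥ 1} be a stationary sequence of real zero-mean square-integrable random variables together with coupled versions γ_ℓ^{(j)} such that γ_ℓ^{(ℓ-k)} is independent of γ_k for ℓ > k, E[γ_ℓ^{(j)}] = 0, and c := Σ_{j=1}^∞ (E(γ_1 - γ_1^{(j)})²)^{1/2} < ∞. Then sup_{t ∈ R} E|N^{-1/2} Σ_{k=1}^N γ_k e^{i k t}|² ≤ E γ_1² + 2 c (E γ_1²)^{1/2} for every N ≥ 1. -/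
open MeasureTheory ProbabilityTheory

section Aux

variable {Ω : Type*} [MeasureSpace Ω] [IsProbabilityMeasure (ℙ : Measure Ω)]

lemma aux_int_mul (f g : Ω → ℝ) (hf : MemLp f 2 ℙ) (hg : MemLp g 2 ℙ) :
    Integrable (fun ω => f ω * g ω) ℙ := by
  refine (hf.integrable_sq.add hg.integrable_sq).mono'
    (hf.aestronglyMeasurable.mul hg.aestronglyMeasurable) ?_
  filter_upwards with ω
  simp only [Real.norm_eq_abs, Pi.add_apply]
  nlinarith [sq_nonneg (|f ω| - |g ω|), abs_mul (f ω) (g ω), abs_nonneg (f ω),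
    abs_nonneg (g ω), sq_abs (f ω), sq_abs (g ω), abs_nonneg (f ω * g ω)]

lemma aux_cs (f g : Ω → ℝ) (hf : MemLp f 2 ℙ) (hg : MemLp g 2 ℙ) :
    |∫ ω, f ω * g ω| ≤ Real.sqrt (∫ ω, (f ω)^2) * Real.sqrt (∫ ω, (g ω)^2) := by
  have habs : |∫ ω, f ω * g ω| ≤ ∫ ω, |f ω| * |g ω| := by
    calc |∫ ω, f ω * g ω| = ‖∫ ω, f ω * g ω‖ := (Real.norm_eq_abs _).symm
    _ ≤ ∫ ω, ‖f ω * g ω‖ := norm_integral_le_integral_norm _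
    _ = ∫ ω, |f ω| * |g ω| := by simp_rw [Real.norm_eq_abs, abs_mul]
  refine habs.trans ?_
  have h2 : Real.HolderConjugate 2 2 := Real.HolderConjugate.two_two
  have hf' : MemLp (fun ω => |f ω|) (ENNReal.ofReal 2) ℙ := by
    rw [show ENNReal.ofReal 2 = 2 by simp]; exact hf.abs
  have hg' : MemLp (fun ω => |g ω|) (ENNReal.ofReal 2) ℙ := by
    rw [show ENNReal.ofReal 2 = 2 by simp]; exact hg.abs
  have key := integral_mul_le_Lp_mul_Lq_of_nonneg h2
    (Filter.Eventually.of_forall fun ω => abs_nonneg (f ω))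
    (Filter.Eventually.of_forall fun ω => abs_nonneg (g ω)) hf' hg'
  have habs2 : ∀ x : ℝ, |x| ^ (2:ℝ) = x ^ 2 := fun x => by
    rw [show (2:ℝ) = ((2:ℕ):ℝ) by norm_num, Real.rpow_natCast, sq_abs]
  simp_rw [habs2] at key
  rw [← Real.sqrt_eq_rpow, ← Real.sqrt_eq_rpow] at key
  exact key

lemma term_re (a b t : ℝ) (k l : ℕ) :
    ((a:ℂ) * Complex.exp (Complex.I * k * t) *
      (starRingEnd ℂ) ((b:ℂ) * Complex.exp (Complex.I * l * t))).re
      = a * b * Real.cos (((k:ℝ) - l) * t) := by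
  have h1 : (starRingEnd ℂ) ((b:ℂ) * Complex.exp (Complex.I * l * t))
      = (b:ℂ) * Complex.exp (-(Complex.I * l * t)) := by
    rw [map_mul, Complex.conj_ofReal, ← Complex.exp_conj]
    congr 1
    simp [Complex.ext_iff]
  rw [h1, show (a:ℂ) * Complex.exp (Complex.I * k * t) *
      ((b:ℂ) * Complex.exp (-(Complex.I * l * t)))
      = ((a * b : ℝ):ℂ) * (Complex.exp (Complex.I * k * t) *
        Complex.exp (-(Complex.I * l * t))) by push_cast; ring,
    ← Complex.exp_add,
    show Complex.I * k * t + -(Complex.I * l * t)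
      = ((((k:ℝ) - l) * t : ℝ):ℂ) * Complex.I by push_cast; ring,
    Complex.re_ofReal_mul, Complex.exp_ofReal_mul_I_re]

lemma norm_sq_sum (S : Finset ℕ) (a : ℕ → ℝ) (t : ℝ) :
    ‖∑ k ∈ S, (a k : ℂ) * Complex.exp (Complex.I * k * t)‖^2
      = ∑ k ∈ S, ∑ l ∈ S, a k * a l * Real.cos (((k:ℝ) - l) * t) := by
  have h0 : (‖∑ k ∈ S, (a k : ℂ) * Complex.exp (Complex.I * k * t)‖:ℝ)^2
      = ((∑ k ∈ S, (a k : ℂ) * Complex.exp (Complex.I * k * t)) *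
        (starRingEnd ℂ) (∑ l ∈ S, (a l : ℂ) * Complex.exp (Complex.I * l * t))).re := by
    rw [Complex.mul_conj, Complex.ofReal_re, ← Complex.sq_norm]
  rw [h0, map_sum, Finset.sum_mul_sum, Complex.re_sum]
  refine Finset.sum_congr rfl fun k _ => ?_
  rw [Complex.re_sum]
  exact Finset.sum_congr rfl fun l _ => term_re _ _ t k l

lemma aux_dist_sum (A : ℕ → ℝ) (hA : ∀ j, 0 ≤ A j) (hAs : Summable A) (T : Finset ℕ) (k : ℕ) :
    ∑ l ∈ (T.erase k), A (Nat.dist k l - 1) ≤ 2 * (∑' j, A j) := by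
  rw [← Finset.sum_filter_add_sum_filter_not (T.erase k) (· < k), two_mul]
  gcongr
  · calc ∑ l ∈ (T.erase k).filter (· < k), A (Nat.dist k l - 1)
        = ∑ l ∈ (T.erase k).filter (· < k), A (k - l - 1) := by
          refine Finset.sum_congr rfl fun l hl => ?_
          have hlk : l < k := by simpa using (Finset.mem_filter.mp hl).2
          have hd : Nat.dist k l = k - l + (l - k) := rfl
          congr 1; omega
      _ = ∑ j ∈ ((T.erase k).filter (· < k)).image (fun l => k - l - 1), A j := by
          rw [Finset.sum_image]
          intro x hx y hy hxy
          have hx' : x < k := by simpa using (Finset.mem_filter.mp hx).2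
          have hy' : y < k := by simpa using (Finset.mem_filter.mp hy).2
          simp only at hxy
          omega
      _ ≤ ∑' j, A j := Summable.sum_le_tsum _ (fun j _ => hA j) hAs
  · calc ∑ l ∈ (T.erase k).filter (¬ · < k), A (Nat.dist k l - 1)
        = ∑ l ∈ (T.erase k).filter (¬ · < k), A (l - k - 1) := by
          refine Finset.sum_congr rfl fun l hl => ?_
          have hlk : ¬ l < k := by simpa using (Finset.mem_filter.mp hl).2
          have hd : Nat.dist k l = k - l + (l - k) := rfl
          congr 1; omega
      _ = ∑ j ∈ ((T.erase k).filter (¬ · < k)).image (fun l => l - k - 1), A j := by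
          rw [Finset.sum_image]
          intro x hx y hy hxy
          have hx' : x ≠ k := Finset.ne_of_mem_erase (Finset.mem_of_mem_filter x hx)
          have hy' : y ≠ k := Finset.ne_of_mem_erase (Finset.mem_of_mem_filter y hy)
          have hx'' : ¬ x < k := by simpa using (Finset.mem_filter.mp hx).2
          have hy'' : ¬ y < k := by simpa using (Finset.mem_filter.mp hy).2
          simp only at hxy
          omega
      _ ≤ ∑' j, A j := Summable.sum_le_tsum _ (fun j _ => hA j) hAs

end Aux

set_option maxHeartbeats 1000000 in
/-- For a stationary zero-mean square-integrable sequence with coupled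
approximations satisfying `c := Σ_j √(E(γ₁-γ₁^{(j)})²) < ∞`, the normalized trigonometric sums
satisfy `sup_t E|N^{-1/2} Σ_{k=1}^N γ_k e^{ikt}|² ≤ Eγ₁² + 2c√(Eγ₁²)`. -/
theorem stmt_10 {Ω : Type*} [MeasureSpace Ω] [IsProbabilityMeasure (ℙ : Measure Ω)]
    (γ : ℕ → Ω → ℝ) (γ' : ℕ → ℕ → Ω → ℝ) (N : ℕ) (hN : 1 ≤ N)
    (hmeas : ∀ k, Measurable (γ k)) (hmeas' : ∀ m k, Measurable (γ' m k))
    (hL2 : ∀ k, MemLp (γ k) 2 ℙ) (hL2' : ∀ m k, MemLp (γ' m k) 2 ℙ)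
    (hmean : ∀ k, ∫ ω, γ k ω = 0) (hmean' : ∀ m k, ∫ ω, γ' m k ω = 0)
    (hindep : ∀ k l : ℕ, k < l → IndepFun (γ' (l - k) l) (γ k) ℙ)
    (hstat2 : ∀ k, ∫ ω, (γ k ω)^2 = ∫ ω, (γ 1 ω)^2)
    (hstat2' : ∀ l j, ∫ ω, (γ l ω - γ' j l ω)^2 = ∫ ω, (γ 1 ω - γ' j 1 ω)^2)
    (c : ℝ) (hc : c = ∑' j : ℕ, Real.sqrt (∫ ω, (γ 1 ω - γ' (j + 1) 1 ω)^2))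
    (hsum : Summable fun j : ℕ => Real.sqrt (∫ ω, (γ 1 ω - γ' (j + 1) 1 ω)^2)) :
    ∀ t : ℝ,
      ∫ ω, (1/(N:ℝ)) *
          ‖∑ k ∈ Finset.Icc 1 N, (γ k ω : ℂ) * Complex.exp (Complex.I * k * t)‖^2
        ≤ (∫ ω, (γ 1 ω)^2) + 2 * c * Real.sqrt (∫ ω, (γ 1 ω)^2) := by
  intro t
  set S := Finset.Icc 1 N with hS
  set E2 := ∫ ω, (γ 1 ω)^2 with hE2
  set A : ℕ → ℝ := fun j => Real.sqrt (∫ ω, (γ 1 ω - γ' (j + 1) 1 ω)^2) with hAdef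
  have hAnn : ∀ j, 0 ≤ A j := fun j => Real.sqrt_nonneg _
  have hsE : 0 ≤ Real.sqrt E2 := Real.sqrt_nonneg _
  have hcnn : 0 ≤ c := hc ▸ tsum_nonneg hAnn
  -- integrability of products
  have hint : ∀ k l : ℕ, Integrable (fun ω => γ k ω * γ l ω * Real.cos (((k:ℝ) - l) * t)) ℙ :=
    fun k l => (aux_int_mul _ _ (hL2 k) (hL2 l)).mul_const _
  -- step 1: rewrite the integral as a double sum
  have step1 : ∫ ω, (1/(N:ℝ)) *
      ‖∑ k ∈ S, (γ k ω : ℂ) * Complex.exp (Complex.I * k * t)‖^2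
      = (1/(N:ℝ)) * ∑ k ∈ S, ∑ l ∈ S,
          (∫ ω, γ k ω * γ l ω) * Real.cos (((k:ℝ) - l) * t) := by
    rw [integral_const_mul]
    congr 1
    have heq : ∀ ω, ‖∑ k ∈ S, (γ k ω : ℂ) * Complex.exp (Complex.I * k * t)‖^2
        = ∑ k ∈ S, ∑ l ∈ S, γ k ω * γ l ω * Real.cos (((k:ℝ) - l) * t) :=
      fun ω => norm_sq_sum S (fun k => γ k ω) t
    simp_rw [heq]
    rw [integral_finset_sum _ fun k _ => integrable_finset_sum _ fun l _ => hint k l]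
    refine Finset.sum_congr rfl fun k _ => ?_
    rw [integral_finset_sum _ fun l _ => hint k l]
    exact Finset.sum_congr rfl fun l _ => integral_mul_const _ _
  rw [step1]
  -- covariance bound
  have cov : ∀ k l : ℕ, k < l → |∫ ω, γ k ω * γ l ω| ≤ Real.sqrt E2 * A (l - k - 1) := by
    intro k l hkl
    have h0 : ∫ ω, γ k ω * γ' (l - k) l ω = 0 := by
      have hcomm : (fun ω => γ k ω * γ' (l - k) l ω) = fun ω => γ' (l - k) l ω * γ k ω :=
        funext fun ω => mul_comm _ _
      rw [hcomm, show (fun ω => γ' (l - k) l ω * γ k ω) = γ' (l - k) l * γ k from rfl,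
        (hindep k l hkl).integral_mul_eq_mul_integral (hmeas' _ _).aestronglyMeasurable
        (hmeas k).aestronglyMeasurable, hmean' (l - k) l, hmean k, mul_zero]
    have h1 : ∫ ω, γ k ω * γ l ω = ∫ ω, γ k ω * (γ l ω - γ' (l - k) l ω) := by
      have : (fun ω => γ k ω * (γ l ω - γ' (l - k) l ω))
          = fun ω => γ k ω * γ l ω - γ k ω * γ' (l - k) l ω := funext fun ω => by ring
      rw [this, integral_sub (aux_int_mul _ _ (hL2 k) (hL2 l))
        (aux_int_mul _ _ (hL2 k) (hL2' _ _)), h0, sub_zero]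
    rw [h1]
    have hcs := aux_cs (γ k) (fun ω => γ l ω - γ' (l - k) l ω) (hL2 k) ((hL2 l).sub (hL2' _ _))
    rw [hstat2 k, hstat2' l (l - k)] at hcs
    have hA1 : A (l - k - 1) = Real.sqrt (∫ ω, (γ 1 ω - γ' (l - k) 1 ω)^2) := by
      have hlk : l - k - 1 + 1 = l - k := by omega
      simp only [hAdef, hlk]
    rw [hA1]
    exact hcs
  have cov' : ∀ k l : ℕ, k ≠ l →
      |(∫ ω, γ k ω * γ l ω) * Real.cos (((k:ℝ) - l) * t)| ≤ Real.sqrt E2 * A (Nat.dist k l - 1) := by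
    intro k l hkl
    have hb : |∫ ω, γ k ω * γ l ω| ≤ Real.sqrt E2 * A (Nat.dist k l - 1) := by
      rcases lt_or_gt_of_ne hkl with h | h
      · have hd : Nat.dist k l = k - l + (l - k) := rfl
        have : Nat.dist k l - 1 = l - k - 1 := by omega
        rw [this]; exact cov k l h
      · have hd : Nat.dist k l = k - l + (l - k) := rfl
        have h2 : Nat.dist k l - 1 = k - l - 1 := by omega
        have hcomm : (fun ω => γ k ω * γ l ω) = fun ω => γ l ω * γ k ω :=
          funext fun ω => mul_comm _ _
        rw [h2, hcomm]; exact cov l k h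
    calc |(∫ ω, γ k ω * γ l ω) * Real.cos (((k:ℝ) - l) * t)|
        = |∫ ω, γ k ω * γ l ω| * |Real.cos (((k:ℝ) - l) * t)| := abs_mul _ _
      _ ≤ |∫ ω, γ k ω * γ l ω| * 1 :=
          mul_le_mul_of_nonneg_left (Real.abs_cos_le_one _) (abs_nonneg _)
      _ = |∫ ω, γ k ω * γ l ω| := mul_one _
      _ ≤ _ := hb
  -- bound the double sum
  have hdiag : ∀ k : ℕ, (∫ ω, γ k ω * γ k ω) * Real.cos (((k:ℝ) - k) * t) = E2 := by
    intro k
    have h1 : (fun ω => γ k ω * γ k ω) = fun ω => (γ k ω)^2 := funext fun ω => (sq (γ k ω)).symm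
    rw [h1, hstat2 k, sub_self, zero_mul, Real.cos_zero, mul_one]
  have hrow : ∀ k ∈ S, ∑ l ∈ S, (∫ ω, γ k ω * γ l ω) * Real.cos (((k:ℝ) - l) * t)
      ≤ E2 + Real.sqrt E2 * (2 * c) := by
    intro k hk
    rw [← Finset.add_sum_erase S _ hk, hdiag k]
    gcongr
    calc ∑ l ∈ S.erase k, (∫ ω, γ k ω * γ l ω) * Real.cos (((k:ℝ) - l) * t)
        ≤ ∑ l ∈ S.erase k, |(∫ ω, γ k ω * γ l ω) * Real.cos (((k:ℝ) - l) * t)| :=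
          Finset.sum_le_sum fun l _ => le_abs_self _
      _ ≤ ∑ l ∈ S.erase k, Real.sqrt E2 * A (Nat.dist k l - 1) :=
          Finset.sum_le_sum fun l hl => cov' k l (Finset.ne_of_mem_erase hl).symm
      _ = Real.sqrt E2 * ∑ l ∈ S.erase k, A (Nat.dist k l - 1) := by
          rw [Finset.mul_sum]
      _ ≤ Real.sqrt E2 * (2 * (∑' j, A j)) := by
          gcongr
          exact aux_dist_sum A hAnn hsum S k
      _ = Real.sqrt E2 * (2 * c) := by rw [hc]
  have hcard' : S.card = N := by rw [hS, Nat.card_Icc]; omega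
  have hcard : (S.card : ℝ) = N := by rw [hcard']
  have htot : ∑ k ∈ S, ∑ l ∈ S, (∫ ω, γ k ω * γ l ω) * Real.cos (((k:ℝ) - l) * t)
      ≤ (N:ℝ) * (E2 + Real.sqrt E2 * (2 * c)) := by
    calc _ ≤ ∑ _k ∈ S, (E2 + Real.sqrt E2 * (2 * c)) := Finset.sum_le_sum hrow
      _ = (S.card : ℝ) * (E2 + Real.sqrt E2 * (2 * c)) := by rw [Finset.sum_const, nsmul_eq_mul]
      _ = (N:ℝ) * (E2 + Real.sqrt E2 * (2 * c)) := by rw [hcard]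
  have hNpos : (0:ℝ) < N := by positivity
  calc (1/(N:ℝ)) * ∑ k ∈ S, ∑ l ∈ S, (∫ ω, γ k ω * γ l ω) * Real.cos (((k:ℝ) - l) * t)
      ≤ (1/(N:ℝ)) * ((N:ℝ) * (E2 + Real.sqrt E2 * (2 * c))) := by
        gcongr

    _ = E2 + 2 * c * Real.sqrt E2 := by field_simp
end

section
/- Let f_1, f_2, ... be real square-integrable random variables such that for some constant g ≥ 0 and all 0 ≤ a < b, E(Σ_{n=a+1}^{b} f_n)² ≤ (b - a) g. Then for every N ≥ 1, E[max_{1 ≤ k ≤ N} (Σ_{n=1}^{k} f_n)²] ≤ C (log(2N))² N g for an absolute constant C. -/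
open MeasureTheory ProbabilityTheory

private def blk {Ω : Type} (f : ℕ → Ω → ℝ) (ω : Ω) (a b : ℕ) : ℝ :=
  ∑ n ∈ Finset.Ioc a b, f n ω

private lemma blk_split {Ω : Type} (f : ℕ → Ω → ℝ) (ω : Ω) {a b c : ℕ}
    (h1 : a ≤ b) (h2 : b ≤ c) : blk f ω a b + blk f ω b c = blk f ω a c :=
  Finset.sum_Ioc_consecutive _ h1 h2

private lemma blk_icc {Ω : Type} (f : ℕ → Ω → ℝ) (ω : Ω) (a b : ℕ) :
    ∑ n ∈ Finset.Icc (a+1) b, f n ω = blk f ω a b := by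
  rw [blk, Finset.Icc_add_one_left_eq_Ioc]

private lemma stmt16_key {Ω : Type} (f : ℕ → Ω → ℝ) {N k : ℕ} (hN : 1 ≤ N)
    (hk2 : k ≤ N) (ω : Ω) :
    (blk f ω 0 k)^2 ≤ (Nat.clog 2 (N+1) : ℝ) *
      ∑ j ∈ Finset.range (Nat.clog 2 (N+1)),
        ∑ m ∈ Finset.range (N / 2^(j+1) + 1),
          (blk f ω (m * 2^(j+1)) (m * 2^(j+1) + 2^j))^2 := by
  set J := Nat.clog 2 (N+1) with hJdef
  have hNJ : N + 1 ≤ 2 ^ J := Nat.le_pow_clog one_lt_two _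
  set P : ℕ → ℕ := fun j => k / 2^j * 2^j with hPdef
  have hP0 : P 0 = k := by simp [hPdef]
  have hPJ : P J = 0 := by
    have hkJ : k < 2 ^ J := by omega
    simp [hPdef, Nat.div_eq_of_lt hkJ]
  have hdd : ∀ j, k / 2^(j+1) = k / 2^j / 2 := by
    intro j
    rw [Nat.div_div_eq_div_mul, ← pow_succ]
  have hPle : ∀ j, P (j+1) ≤ P j := by
    intro j
    have h1 : P (j+1) = (k / 2^j / 2 * 2) * 2^j := by
      show k / 2^(j+1) * 2^(j+1) = _
      rw [hdd j, pow_succ]; ring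
    rw [h1]
    exact Nat.mul_le_mul_right _ (Nat.div_mul_le_self _ _)
  have htel : ∑ j ∈ Finset.range J, (blk f ω 0 (P j) - blk f ω 0 (P (j+1)))
      = blk f ω 0 k := by
    rw [Finset.sum_range_sub' (fun j => blk f ω 0 (P j)) J, hP0, hPJ]
    simp [blk]
  have hdiff : ∀ j, blk f ω 0 (P j) - blk f ω 0 (P (j+1)) = blk f ω (P (j+1)) (P j) := by
    intro j
    have := blk_split f ω (Nat.zero_le (P (j+1))) (hPle j)
    linarith
  have hterm : ∀ j ∈ Finset.range J,
      (blk f ω (P (j+1)) (P j))^2 ≤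
        ∑ m ∈ Finset.range (N / 2^(j+1) + 1),
          (blk f ω (m * 2^(j+1)) (m * 2^(j+1) + 2^j))^2 := by
    intro j _
    have hq : k / 2^(j+1) ≤ N / 2^(j+1) := Nat.div_le_div_right hk2
    have hqmem : k / 2^(j+1) ∈ Finset.range (N / 2^(j+1) + 1) := by
      rw [Finset.mem_range]; omega
    have hdm := Nat.div_add_mod (k / 2^j) 2
    rcases Nat.mod_two_eq_zero_or_one (k / 2^j) with hr | hr
    · -- P j = P (j+1), block is empty
      have h2 : k / 2^j = 2 * (k / 2^(j+1)) := by rw [hdd j]; omega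
      have hPeq : P j = P (j+1) := by
        show k / 2^j * 2^j = k / 2^(j+1) * 2^(j+1)
        rw [h2, pow_succ]; ring
      rw [hPeq, blk, Finset.Ioc_self, Finset.sum_empty]
      have : ((0:ℝ))^2 = 0 := by norm_num
      rw [this]
      exact Finset.sum_nonneg fun m _ => sq_nonneg _
    · have h2 : k / 2^j = 2 * (k / 2^(j+1)) + 1 := by rw [hdd j]; omega
      have hPj : P j = k / 2^(j+1) * 2^(j+1) + 2^j := by
        show k / 2^j * 2^j = _
        rw [h2, pow_succ]; ring
      have hPj1 : P (j+1) = k / 2^(j+1) * 2^(j+1) := rfl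
      rw [hPj, hPj1]
      exact Finset.single_le_sum (f := fun m =>
        (blk f ω (m * 2^(j+1)) (m * 2^(j+1) + 2^j))^2)
        (fun m _ => sq_nonneg _) hqmem
  calc (blk f ω 0 k)^2
      = (∑ j ∈ Finset.range J, blk f ω (P (j+1)) (P j))^2 := by
        rw [← htel]
        congr 1
        exact Finset.sum_congr rfl fun j _ => hdiff j
    _ ≤ (J:ℝ) * ∑ j ∈ Finset.range J, (blk f ω (P (j+1)) (P j))^2 := by
        have h := sq_sum_le_card_mul_sum_sq (s := Finset.range J)
          (f := fun j => blk f ω (P (j+1)) (P j))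
        simpa using h
    _ ≤ (J:ℝ) * ∑ j ∈ Finset.range J,
          ∑ m ∈ Finset.range (N / 2^(j+1) + 1),
            (blk f ω (m * 2^(j+1)) (m * 2^(j+1) + 2^j))^2 :=
        mul_le_mul_of_nonneg_left (Finset.sum_le_sum hterm) (Nat.cast_nonneg J)

/-- Menshov-type maximal inequality: if `E(Σ_{n=a+1}^b f_n)² ≤ (b-a)g` for all
`0 ≤ a < b`, then `E[max_{1≤k≤N} (Σ_{n=1}^k f_n)²] ≤ C (log 2N)² N g` for an absolute
constant `C`. -/
theorem stmt_16 :
    ∃ C : ℝ, 0 < C ∧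
      ∀ (Ω : Type) (_ : MeasureSpace Ω) (_ : IsProbabilityMeasure (ℙ : Measure Ω))
        (f : ℕ → Ω → ℝ) (g : ℝ),
        0 ≤ g →
        (∀ n, Measurable (f n)) →
        (∀ n, MemLp (f n) 2 ℙ) →
        (∀ a b : ℕ, a < b →
          ∫ ω, (∑ n ∈ Finset.Icc (a + 1) b, f n ω)^2 ≤ ((b : ℝ) - a) * g) →
        ∀ (N : ℕ) (hN : 1 ≤ N),
          ∫ ω, (Finset.Icc 1 N).sup' (Finset.nonempty_Icc.mpr hN)
              (fun k => (∑ n ∈ Finset.Icc 1 k, f n ω)^2)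
            ≤ C * (Real.log (2 * N))^2 * N * g := by
  refine ⟨8, by norm_num, ?_⟩
  intro Ω _ _ f g hg hmeas hL2 hbound N hN
  set J := Nat.clog 2 (N+1) with hJdef
  have hNJ : N + 1 ≤ 2 ^ J := Nat.le_pow_clog one_lt_two _
  have hJ1 : 1 ≤ J := by
    by_contra h
    have hJ0 : J = 0 := by omega
    rw [hJ0, pow_zero] at hNJ
    omega
  have hpow : 2 ^ (J - 1) ≤ N := by
    have h : 2 ^ (J - 1) < N + 1 := by
      simpa [Nat.pred_eq_sub_one, hJdef] using
        Nat.pow_pred_clog_lt_self (b := 2) one_lt_two (x := N+1) (by omega)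
    omega
  have h2J : (2:ℕ) ^ J ≤ 2 * N := by
    have h : (2:ℕ) ^ J = 2 * 2 ^ (J-1) := by
      rw [← pow_succ']
      congr 1
      omega
    omega
  -- integrability
  have hblkL2 : ∀ a b : ℕ, MemLp (fun ω => blk f ω a b) 2 (ℙ : Measure Ω) := by
    intro a b
    have h := memLp_finset_sum' (Finset.Ioc a b) (fun n _ => hL2 n)
    have heq : (∑ n ∈ Finset.Ioc a b, f n) = fun ω => blk f ω a b := by
      funext ω; simp [blk, Finset.sum_apply]
    rwa [heq] at h
  have hblksq : ∀ a b : ℕ, Integrable (fun ω => (blk f ω a b)^2) (ℙ : Measure Ω) :=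
    fun a b => (hblkL2 a b).integrable_sq
  set G : Ω → ℝ := fun ω => ∑ j ∈ Finset.range J,
      ∑ m ∈ Finset.range (N / 2^(j+1) + 1),
        (blk f ω (m * 2^(j+1)) (m * 2^(j+1) + 2^j))^2 with hGdef
  have hGint : Integrable G (ℙ : Measure Ω) := by
    rw [hGdef]
    exact integrable_finset_sum _ (fun j _ =>
      integrable_finset_sum _ (fun m _ => hblksq _ _))
  -- pointwise bound
  have h_ptwise : ∀ ω, (Finset.Icc 1 N).sup' (Finset.nonempty_Icc.mpr hN)
      (fun k => (∑ n ∈ Finset.Icc 1 k, f n ω)^2) ≤ (J:ℝ) * G ω := by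
    intro ω
    apply Finset.sup'_le
    intro k hk
    rw [Finset.mem_Icc] at hk
    have : ∑ n ∈ Finset.Icc 1 k, f n ω = blk f ω 0 k := blk_icc f ω 0 k
    rw [this]
    exact stmt16_key f hN hk.2 ω
  have h0 : 0 ≤ᵐ[ℙ] fun ω => (Finset.Icc 1 N).sup' (Finset.nonempty_Icc.mpr hN)
      (fun k => (∑ n ∈ Finset.Icc 1 k, f n ω)^2) := by
    apply Filter.Eventually.of_forall
    intro ω
    exact le_trans (sq_nonneg (∑ n ∈ Finset.Icc 1 N, f n ω))
      (Finset.le_sup' (fun k => (∑ n ∈ Finset.Icc 1 k, f n ω)^2)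
        (Finset.mem_Icc.mpr ⟨hN, le_refl N⟩))
  -- integral bounds for blocks
  have hInt : ∀ j m : ℕ,
      ∫ ω, (blk f ω (m * 2^(j+1)) (m * 2^(j+1) + 2^j))^2 ≤ (2:ℝ)^j * g := by
    intro j m
    have hab : m * 2^(j+1) < m * 2^(j+1) + 2^j :=
      Nat.lt_add_of_pos_right (Nat.pow_pos (n := j) (by norm_num : 0 < 2))
    have h := hbound (m * 2^(j+1)) (m * 2^(j+1) + 2^j) hab
    have heq : ∀ ω : Ω, (∑ n ∈ Finset.Icc (m * 2^(j+1) + 1) (m * 2^(j+1) + 2^j), f n ω)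
        = blk f ω (m * 2^(j+1)) (m * 2^(j+1) + 2^j) := fun ω => blk_icc f ω _ _
    simp only [heq] at h
    calc ∫ ω, (blk f ω (m * 2^(j+1)) (m * 2^(j+1) + 2^j))^2
        ≤ ((↑(m * 2^(j+1) + 2^j) : ℝ) - ↑(m * 2^(j+1))) * g := h
      _ = (2:ℝ)^j * g := by push_cast; ring
  have hlevel : ∀ j ∈ Finset.range J,
      ∑ m ∈ Finset.range (N / 2^(j+1) + 1),
        (∫ ω, (blk f ω (m * 2^(j+1)) (m * 2^(j+1) + 2^j))^2)
      ≤ 3/2 * N * g := by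
    intro j hj
    rw [Finset.mem_range] at hj
    have ha2 : ((N / 2^(j+1) : ℕ) : ℝ) * (2:ℝ)^j ≤ (N:ℝ)/2 := by
      have h' : ((N / 2^(j+1) : ℕ) : ℝ) * (2:ℝ)^(j+1) ≤ (N:ℝ) := by
        exact_mod_cast Nat.div_mul_le_self N (2^(j+1))
      have he : ((N / 2^(j+1) : ℕ) : ℝ) * (2:ℝ)^(j+1)
          = (((N / 2^(j+1) : ℕ) : ℝ) * (2:ℝ)^j) * 2 := by ring
      linarith [he ▸ h']
    have hb : (2:ℝ)^j ≤ (N:ℝ) := by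
      have h1 : (2:ℕ)^j ≤ 2^(J-1) := Nat.pow_le_pow_right (by norm_num) (by omega)
      exact_mod_cast le_trans h1 hpow
    have h2 : ((N / 2^(j+1) + 1 : ℕ) : ℝ) * 2^j ≤ 3/2 * N := by
      push_cast
      linarith [ha2, hb]
    calc ∑ m ∈ Finset.range (N / 2^(j+1) + 1),
          (∫ ω, (blk f ω (m * 2^(j+1)) (m * 2^(j+1) + 2^j))^2)
        ≤ ∑ _m ∈ Finset.range (N / 2^(j+1) + 1), (2:ℝ)^j * g :=
          Finset.sum_le_sum (fun m _ => hInt j m)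
      _ = ((N / 2^(j+1) + 1 : ℕ) : ℝ) * ((2:ℝ)^j * g) := by
          rw [Finset.sum_const, Finset.card_range, nsmul_eq_mul]
      _ ≤ 3/2 * N * g := by
          rw [← mul_assoc]
          exact mul_le_mul_of_nonneg_right h2 hg
  -- log bound
  have hJlog : (J:ℝ) * Real.log 2 ≤ Real.log (2 * N) := by
    have hc : ((2:ℝ))^J ≤ 2 * N := by exact_mod_cast h2J
    have := Real.log_le_log (by positivity : (0:ℝ) < 2^J) hc
    rwa [Real.log_pow] at this
  have hfinal : (J:ℝ) * ((J:ℝ) * (3/2 * N * g)) ≤ 8 * (Real.log (2 * N))^2 * N * g := by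
    have hJnn : (0:ℝ) ≤ J := Nat.cast_nonneg _
    have hl2 : (0.6931471803:ℝ) < Real.log 2 := Real.log_two_gt_d9
    have h1 : ((J:ℝ) * Real.log 2)^2 ≤ (Real.log (2 * N))^2 := by
      apply pow_le_pow_left₀ (by positivity) hJlog
    have hsq : (0.48:ℝ) ≤ (Real.log 2)^2 := by nlinarith [hl2]
    have h2' : (0.48:ℝ) * (J:ℝ)^2 ≤ (Real.log (2 * N))^2 := by
      linarith [h1, mul_le_mul_of_nonneg_right hsq (sq_nonneg (J:ℝ))]
    have h32 : (3/2:ℝ) * (J:ℝ)^2 ≤ 8 * (Real.log (2 * N))^2 := by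
      linarith [h2', sq_nonneg ((J:ℝ))]
    have hNg : (0:ℝ) ≤ (N:ℝ) * g := mul_nonneg (Nat.cast_nonneg _) hg
    calc (J:ℝ) * ((J:ℝ) * (3/2 * N * g))
        = (3/2 * (J:ℝ)^2) * ((N:ℝ) * g) := by ring
      _ ≤ (8 * (Real.log (2 * N))^2) * ((N:ℝ) * g) :=
          mul_le_mul_of_nonneg_right h32 hNg
      _ = 8 * (Real.log (2 * N))^2 * N * g := by ring
  -- main chain
  calc ∫ ω, (Finset.Icc 1 N).sup' (Finset.nonempty_Icc.mpr hN)
        (fun k => (∑ n ∈ Finset.Icc 1 k, f n ω)^2)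
      ≤ ∫ ω, (J:ℝ) * G ω :=
        integral_mono_of_nonneg h0 (hGint.const_mul _) (Filter.Eventually.of_forall h_ptwise)
    _ = (J:ℝ) * ∫ ω, G ω := integral_const_mul _ _
    _ = (J:ℝ) * ∑ j ∈ Finset.range J,
          ∑ m ∈ Finset.range (N / 2^(j+1) + 1),
            (∫ ω, (blk f ω (m * 2^(j+1)) (m * 2^(j+1) + 2^j))^2) := by
        congr 1
        rw [hGdef]
        rw [integral_finset_sum _ (fun j _ =>
          integrable_finset_sum _ (fun m _ => hblksq _ _))]
        exact Finset.sum_congr rfl fun j _ =>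
          integral_finset_sum _ (fun m _ => hblksq _ _)
    _ ≤ (J:ℝ) * ((J:ℝ) * (3/2 * N * g)) := by
        apply mul_le_mul_of_nonneg_left _ (Nat.cast_nonneg J)
        calc ∑ j ∈ Finset.range J,
              ∑ m ∈ Finset.range (N / 2^(j+1) + 1),
                (∫ ω, (blk f ω (m * 2^(j+1)) (m * 2^(j+1) + 2^j))^2)
            ≤ ∑ _j ∈ Finset.range J, 3/2 * (N:ℝ) * g := Finset.sum_le_sum hlevel
          _ = (J:ℝ) * (3/2 * N * g) := by
              rw [Finset.sum_const, Finset.card_range, nsmul_eq_mul]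
    _ ≤ 8 * (Real.log (2 * N))^2 * N * g := hfinal
end
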